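/- arXiv:2309.01980 — 2 statements merged into one kernel-verified Lean document; each statement's English description precedes it below -/
import Mathlib

section
/- Let x̄ ∈ ℝ^n be an M-stationary point of problem (P) and let ȳ ∈ Λ(x̄) be arbitrary. Let {(x^k, z^k, y^k)} be generated by the safeguarded implicit augmented Lagrangian algorithm with ε_k → 0 and with ŷ^k = y^{k−1} for all sufficiently large k. Then there exist a constant ρ_l > 0 and a neighborhood U of (x̄, c(x̄), ȳ) such that for every index k with (x^k, z^k, y^k) ∈ U: ρ_l · Θ(x^k, z^k, y^k) ≤ ‖x^k − x̄‖ + ‖z^k − c(x̄)‖ + ‖y^k − ȳ‖. -/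
open Filter Topology Bornology

noncomputable section

/-- Euclidean space `ℝ^d`. -/
abbrev Euc (d : ℕ) := EuclideanSpace ℝ (Fin d)

namespace Paper

variable {n m : ℕ}

/-- The effective domain of an extended-real-valued function. -/
def edom (g : Euc m → EReal) : Set (Euc m) := {z | g z < ⊤}

/-- `g` maps into `ℝ ∪ {∞}` and is proper (its domain is nonempty). -/
def ProperFn (g : Euc m → EReal) : Prop := (∀ z, g z ≠ ⊥) ∧ ∃ z, g z < ⊤

/-- `z ↦ g z + ‖z‖²/(2μ)` is bounded below. -/
def ProxBoundedWith (g : Euc m → EReal) (μ : ℝ) : Prop :=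
  ∃ b : ℝ, ∀ z, (b : EReal) ≤ g z + ((‖z‖ ^ 2 / (2 * μ) : ℝ) : EReal)

/-- `g` is prox-bounded. -/
def ProxBounded (g : Euc m → EReal) : Prop := ∃ μ : ℝ, 0 < μ ∧ ProxBoundedWith g μ

/-- `0 < μ < μ_g`, where `μ_g` is the threshold of prox-boundedness of `g`. -/
def BelowThreshold (g : Euc m → EReal) (μ : ℝ) : Prop :=
  0 < μ ∧ ∃ μ' : ℝ, μ < μ' ∧ ProxBoundedWith g μ'

/-- The tangent cone to `Ω` at `wbar`. -/
def tangentCone {E : Type*} [NormedAddCommGroup E] [NormedSpace ℝ E]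
    (Ω : Set E) (wbar : E) : Set E :=
  {v | ∃ (t : ℕ → ℝ) (w : ℕ → E), (∀ k, 0 < t k) ∧ Tendsto t atTop (𝓝 0) ∧
        Tendsto w atTop (𝓝 v) ∧ ∀ k, wbar + t k • w k ∈ Ω}

/-- The regular (Fréchet) subdifferential of `g` at `zbar`. -/
def regSubdiff (g : Euc m → EReal) (zbar : Euc m) : Set (Euc m) :=
  {v | 0 ≤ liminf (fun z : Euc m =>
      (g z - g zbar - ((inner ℝ v (z - zbar) : ℝ) : EReal)) / ((‖z - zbar‖ : ℝ) : EReal))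
      (𝓝[≠] zbar)}

/-- The limiting (Mordukhovich) subdifferential of `g` at `zbar`. -/
def limSubdiff (g : Euc m → EReal) (zbar : Euc m) : Set (Euc m) :=
  {v | ∃ zs vs : ℕ → Euc m, Tendsto zs atTop (𝓝 zbar) ∧
        Tendsto (fun k => g (zs k)) atTop (𝓝 (g zbar)) ∧
        Tendsto vs atTop (𝓝 v) ∧ ∀ k, vs k ∈ regSubdiff g (zs k)}

/-- The subderivative `dg(zbar)(v)`. -/
def subderiv (g : Euc m → EReal) (zbar v : Euc m) : EReal :=
  liminf (fun p : ℝ × Euc m => (g (zbar + p.1 • p.2) - g zbar) / ((p.1 : ℝ) : EReal))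
    ((𝓝[>] (0 : ℝ)) ×ˢ 𝓝 v)

/-- The second subderivative `d²g(zbar, ybar)(v)`. -/
def secondSubderiv (g : Euc m → EReal) (zbar ybar v : Euc m) : EReal :=
  liminf (fun p : ℝ × Euc m =>
      (g (zbar + p.1 • p.2) - g zbar - ((p.1 * (inner ℝ ybar p.2 : ℝ) : ℝ) : EReal)) /
        ((p.1 ^ 2 / 2 : ℝ) : EReal))
    ((𝓝[>] (0 : ℝ)) ×ˢ 𝓝 v)

/-- The Lagrangian `L(·, y) = f + ⟨y, c ·⟩` of (P). -/
def LagFn (f : Euc n → ℝ) (c : Euc n → Euc m) (y : Euc m) : Euc n → ℝ :=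
  fun x => f x + (inner ℝ y (c x) : ℝ)

/-- `∇ₓL(xbar, y) = 0`. -/
def gradLagZero (f : Euc n → ℝ) (c : Euc n → Euc m) (xbar : Euc n) (y : Euc m) : Prop :=
  fderiv ℝ (LagFn f c y) xbar = 0

/-- The set `Λ(xbar)` of Lagrange multipliers of the M-stationarity system at `xbar`. -/
def Lambda (f : Euc n → ℝ) (c : Euc n → Euc m) (g : Euc m → EReal) (xbar : Euc n) :
    Set (Euc m) :=
  {y | gradLagZero f c xbar y ∧ y ∈ limSubdiff g (c xbar)}

/-- `∇²ₓₓL(xbar, y)[u, w]`. -/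
def hessLag (f : Euc n → ℝ) (c : Euc n → Euc m) (xbar : Euc n) (y : Euc m) (u w : Euc n) : ℝ :=
  iteratedFDeriv ℝ 2 (LagFn f c y) xbar ![u, w]

/-- The critical cone `C(xbar)` of (P). -/
def critCone (f : Euc n → ℝ) (c : Euc n → Euc m) (g : Euc m → EReal) (xbar : Euc n) :
    Set (Euc n) :=
  {u | ((fderiv ℝ f xbar u : ℝ) : EReal) + subderiv g (c xbar) (fderiv ℝ c xbar u) ≤ 0}

/-- The directional multiplier set `Λ(xbar, u)`. -/
def dirLambda (f : Euc n → ℝ) (c : Euc n → Euc m) (g : Euc m → EReal) (xbar : Euc n)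
    (u : Euc n) : Set (Euc m) :=
  {y | gradLagZero f c xbar y ∧
    subderiv g (c xbar) (fderiv ℝ c xbar u) = ((inner ℝ y (fderiv ℝ c xbar u) : ℝ) : EReal) ∧
    secondSubderiv g (c xbar) y (fderiv ℝ c xbar u) ≠ ⊥}

/-- The second-order sufficient condition (SOSC) for (P) at `xbar`. -/
def SOSC (f : Euc n → ℝ) (c : Euc n → Euc m) (g : Euc m → EReal) (xbar : Euc n) : Prop :=
  ∀ u ∈ critCone f c g xbar, u ≠ 0 → ∃ y ∈ dirLambda f c g xbar u,
    0 < ((hessLag f c xbar y u u : ℝ) : EReal) + secondSubderiv g (c xbar) y (fderiv ℝ c xbar u)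

/-- The stationarity residual `Θ(x, z, y)`; the distance to the (possibly empty)
subdifferential is taken in `EReal` via an infimum. -/
def Theta (f : Euc n → ℝ) (c : Euc n → Euc m) (g : Euc m → EReal)
    (x : Euc n) (z y : Euc m) : EReal :=
  ((‖fderiv ℝ (LagFn f c y) x‖ + ‖c x - z‖ : ℝ) : EReal) +
    ⨅ v ∈ limSubdiff g z, ((‖y - v‖ : ℝ) : EReal)

/-- The graphical derivative `D(∂g)(zbar, ybar)(v)` of the limiting subdifferential mapping. -/
def gDeriv (g : Euc m → EReal) (zbar ybar v : Euc m) : Set (Euc m) :=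
  {η | (v, η) ∈ tangentCone {p : Euc m × Euc m | p.2 ∈ limSubdiff g p.1} (zbar, ybar)}

/-- The Moreau envelope `g^μ(w)`. -/
def moreau (g : Euc m → EReal) (μ : ℝ) (w : Euc m) : EReal :=
  ⨅ z, (g z + ((‖z - w‖ ^ 2 / (2 * μ) : ℝ) : EReal))

/-- The augmented Lagrangian `L_μ(x, y)` of (P). -/
def ALfun (f : Euc n → ℝ) (c : Euc n → Euc m) (g : Euc m → EReal) (μ : ℝ)
    (x : Euc n) (y : Euc m) : EReal :=
  (f x : EReal) + moreau g μ (c x + μ • y) - ((μ / 2 * ‖y‖ ^ 2 : ℝ) : EReal)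

/-- `xbar` is a strict local minimizer of (P). -/
def StrictLocalMin (f : Euc n → ℝ) (c : Euc n → Euc m) (g : Euc m → EReal)
    (xbar : Euc n) : Prop :=
  c xbar ∈ edom g ∧ ∃ ρ : ℝ, 0 < ρ ∧ ∀ x : Euc n, ‖x - xbar‖ ≤ ρ → c x ∈ edom g → x ≠ xbar →
    (f xbar : EReal) + g (c xbar) < (f x : EReal) + g (c x)

open Classical in
/-- A sequence generated by the safeguarded implicit augmented Lagrangian method
(Algorithm 4.1) for problem (P). -/
structure ALMSeq (n m : ℕ) (f : Euc n → ℝ) (c : Euc n → Euc m) (g : Euc m → EReal) where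
  /-- sufficient-decrease parameter -/
  θ : ℝ
  /-- penalty-reduction parameter -/
  κ : ℝ
  hθ : 0 < θ ∧ θ < 1
  hκ : 0 < κ ∧ κ < 1
  /-- safeguarding set -/
  Y : Set (Euc m)
  hYne : Y.Nonempty
  hYbdd : IsBounded Y
  /-- primal iterates -/
  x : ℕ → Euc n
  /-- auxiliary (certificate) iterates -/
  z : ℕ → Euc m
  /-- safeguarded multiplier estimates -/
  yhat : ℕ → Euc m
  /-- multiplier iterates -/
  y : ℕ → Euc m
  /-- penalty parameters -/
  μ : ℕ → ℝ
  /-- inner ℝ tolerances -/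
  ε : ℕ → ℝ
  hyhatY : ∀ k, yhat k ∈ Y
  hεnn : ∀ k, 0 ≤ ε k
  hμthr : ∀ k, BelowThreshold g (μ k)
  /-- `z k ∈ prox_{μ_k g}(c(x^k) + μ_k ŷ^k)` -/
  hprox : ∀ k, ∀ w : Euc m,
    g (z k) + ((‖z k - (c (x k) + μ k • yhat k)‖ ^ 2 / (2 * μ k) : ℝ) : EReal) ≤
      g w + ((‖w - (c (x k) + μ k • yhat k)‖ ^ 2 / (2 * μ k) : ℝ) : EReal)
  /-- dual update rule -/
  hy : ∀ k, y k = yhat k + (μ k)⁻¹ • (c (x k) - z k)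
  /-- approximate stationarity for the subproblem, `‖∇ₓL^S_{μ_k}(x^k,z^k,ŷ^k)‖ ≤ ε_k` -/
  hdual : ∀ k, ‖fderiv ℝ (LagFn f c (y k)) (x k)‖ ≤ ε k
  /-- penalty update rule -/
  hμupd : ∀ k, μ (k + 1) =
    if k = 0 ∨ ‖c (x k) - z k‖ ≤ θ * ‖c (x (k - 1)) - z (k - 1)‖ then μ k else κ * μ k

lemma keyReal (μ gz gw I N A : ℝ) (hμ : 0 < μ)
    (h : gz + A / (2*μ) ≤ gw + (N - 2*I + A) / (2*μ)) :
    -(N / (2*μ)) ≤ gw - gz - I/μ := by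
  have h2 : (0:ℝ) < 2*μ := by linarith
  have e : (N - 2*I + A)/(2*μ) - A/(2*μ) = N/(2*μ) - I/μ := by field_simp; ring
  have h' : gz - gw ≤ (N - 2*I+A)/(2*μ) - A/(2*μ) := by linarith
  rw [e] at h'; linarith

lemma prox_mem_regSubdiff (g : Euc m → EReal) (hgp : ProperFn g) (μ : ℝ) (hμ : 0 < μ)
    (w₀ zbar : Euc m)
    (hprox : ∀ w : Euc m, g zbar + ((‖zbar - w₀‖ ^ 2 / (2 * μ) : ℝ) : EReal) ≤
      g w + ((‖w - w₀‖ ^ 2 / (2 * μ) : ℝ) : EReal)) :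
    μ⁻¹ • (w₀ - zbar) ∈ regSubdiff g zbar := by
  obtain ⟨hnb, z₀, hz₀⟩ := hgp
  -- g zbar is finite
  have htop : g zbar ≠ ⊤ := by
    intro ht
    have h0 := hprox z₀
    rw [ht, EReal.top_add_of_ne_bot (by exact EReal.coe_ne_bot _)] at h0
    have : g z₀ + ((‖z₀ - w₀‖ ^ 2 / (2 * μ) : ℝ) : EReal) < ⊤ :=
      EReal.add_lt_top hz₀.ne (EReal.coe_ne_top _)
    exact absurd (top_le_iff.mp h0) this.ne
  set gz : ℝ := (g zbar).toReal with hgzdef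
  have hgz : g zbar = (gz : EReal) := (EReal.coe_toReal htop (hnb zbar)).symm
  set v : Euc m := μ⁻¹ • (w₀ - zbar) with hvdef
  -- pointwise bound
  have hpt : ∀ w : Euc m, w ≠ zbar →
      ((-(‖w - zbar‖ / (2*μ)) : ℝ) : EReal) ≤
        (g w - g zbar - ((inner ℝ v (w - zbar) : ℝ) : EReal)) / ((‖w - zbar‖ : ℝ) : EReal) := by
    intro w hw
    have hNpos : (0:ℝ) < ‖w - zbar‖ := by
      rw [norm_pos_iff]; exact sub_ne_zero_of_ne hw
    by_cases hwt : g w = ⊤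
    · rw [hwt, hgz, EReal.top_sub_coe, EReal.top_sub_coe,
        EReal.top_div_of_pos_ne_top (by exact_mod_cast hNpos) (EReal.coe_ne_top _)]
      exact le_top
    · set gw : ℝ := (g w).toReal with hgwdef
      have hgw : g w = (gw : EReal) := (EReal.coe_toReal hwt (hnb w)).symm
      have hre : gz + ‖w₀ - zbar‖^2 / (2*μ) ≤
          gw + (‖w - zbar‖^2 - 2 * (inner ℝ (w - zbar) (w₀ - zbar) : ℝ) + ‖w₀ - zbar‖^2) / (2*μ) := by
        have h0 := hprox w
        rw [hgz, hgw, ← EReal.coe_add, ← EReal.coe_add, EReal.coe_le_coe_iff] at h0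
        have e1 : ‖zbar - w₀‖ = ‖w₀ - zbar‖ := norm_sub_rev _ _
        have e2 : ‖w - w₀‖^2 = ‖w - zbar‖^2 - 2 * (inner ℝ (w - zbar) (w₀ - zbar) : ℝ) + ‖w₀ - zbar‖^2 := by
          have : w - w₀ = (w - zbar) - (w₀ - zbar) := by abel
          rw [this, @norm_sub_sq_real]
        rw [e1, e2] at h0
        exact h0
      have hkey : -(‖w - zbar‖^2 / (2*μ)) ≤ gw - gz - (inner ℝ (w - zbar) (w₀ - zbar) : ℝ)/μ :=
        keyReal μ gz gw _ _ _ hμ hre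
      have hI : (inner ℝ v (w - zbar) : ℝ) = (inner ℝ (w - zbar) (w₀ - zbar) : ℝ) / μ := by
        rw [hvdef, real_inner_smul_left, real_inner_comm, div_eq_inv_mul]
      rw [hgz, hgw, hI, ← EReal.coe_sub, ← EReal.coe_sub, ← EReal.coe_div, EReal.coe_le_coe_iff]
      have hdiv : -(‖w - zbar‖^2/(2*μ)) / ‖w - zbar‖ ≤
          (gw - gz - (inner ℝ (w - zbar) (w₀ - zbar) : ℝ)/μ) / ‖w - zbar‖ := by gcongr
      have e3 : -(‖w - zbar‖^2/(2*μ)) / ‖w - zbar‖ = -(‖w - zbar‖/(2*μ)) := by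
        field_simp
      rw [e3] at hdiv; exact hdiv
  -- liminf
  rw [regSubdiff, Set.mem_setOf_eq]
  by_cases hbot : (𝓝[≠] zbar : Filter (Euc m)) = ⊥
  · simp [hbot]
  · haveI : (𝓝[≠] zbar : Filter (Euc m)).NeBot := ⟨hbot⟩
    have hG : Tendsto (fun w : Euc m => ((-(‖w - zbar‖ / (2*μ)) : ℝ) : EReal)) (𝓝[≠] zbar)
        (𝓝 (0 : EReal)) := by
      have hreal : Tendsto (fun w : Euc m => -(‖w - zbar‖ / (2*μ))) (𝓝 zbar) (𝓝 0) := by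
        have : Continuous fun w : Euc m => -(‖w - zbar‖ / (2*μ)) := by fun_prop
        have h0 := this.tendsto zbar
        simpa using h0
      have h1 : Tendsto (fun w : Euc m => -(‖w - zbar‖ / (2*μ))) (𝓝[≠] zbar) (𝓝 0) :=
        hreal.mono_left nhdsWithin_le_nhds
      have := (continuous_coe_real_ereal.tendsto 0).comp h1
      simpa [Function.comp_def] using this
    have hll : liminf (fun w : Euc m => ((-(‖w - zbar‖ / (2*μ)) : ℝ) : EReal)) (𝓝[≠] zbar) ≤
        liminf (fun w : Euc m =>
          (g w - g zbar - ((inner ℝ v (w - zbar) : ℝ) : EReal)) / ((‖w - zbar‖ : ℝ) : EReal))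
          (𝓝[≠] zbar) := by
      refine liminf_le_liminf ?_ (by isBoundedDefault) (by isBoundedDefault)
      filter_upwards [self_mem_nhdsWithin] with w hw
      exact hpt w hw
    rw [hG.liminf_eq] at hll
    exact hll

lemma biInf_norm_zero (S : Set (Euc m)) (y : Euc m) (hy : y ∈ S) :
    (⨅ v ∈ S, ((‖y - v‖ : ℝ) : EReal)) = 0 := by
  apply le_antisymm
  · calc (⨅ v ∈ S, ((‖y - v‖ : ℝ) : EReal)) ≤ ((‖y - y‖ : ℝ) : EReal) := iInf₂_le y hy
      _ = 0 := by simp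
  · exact le_iInf₂ fun v _ => EReal.coe_nonneg.mpr (norm_nonneg _)


set_option maxHeartbeats 1000000 in
theorem statement17 {n m : ℕ}
    (f : Euc n → ℝ) (c : Euc n → Euc m) (g : Euc m → EReal)
    (hf : ContDiff ℝ 2 f) (hc : ContDiff ℝ 2 c)
    (hgp : ProperFn g) (hglsc : LowerSemicontinuous g) (hgpb : ProxBounded g)
    (hphi : ∃ r : ℝ, (⨅ x : Euc n, ((f x : EReal) + g (c x))) = (r : EReal))
    (xbar : Euc n) (ybar : Euc m) (hybar : ybar ∈ Lambda f c g xbar)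
    (A : ALMSeq n m f c g)
    (hε0 : Tendsto A.ε atTop (𝓝 0))
    (hyh : ∀ᶠ k in atTop, A.yhat (k + 1) = A.y k) :
    ∃ ρl : ℝ, 0 < ρl ∧ ∃ U ∈ 𝓝 ((xbar, c xbar, ybar) : Euc n × Euc m × Euc m),
      ∀ k, (A.x k, A.z k, A.y k) ∈ U →
        (ρl : EReal) * Theta f c g (A.x k) (A.z k) (A.y k) ≤
          ((‖A.x k - xbar‖ + ‖A.z k - c xbar‖ + ‖A.y k - ybar‖ : ℝ) : EReal) := by
  classical
  obtain ⟨hgrad0, -⟩ := hybar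
  have hfd : Differentiable ℝ f := hf.differentiable (by norm_num)
  have hcd : Differentiable ℝ c := hc.differentiable (by norm_num)
  -- formula for the Lagrangian gradient
  have hD : ∀ (y : Euc m) (x : Euc n), fderiv ℝ (LagFn f c y) x
      = fderiv ℝ f x + (innerSL ℝ y).comp (fderiv ℝ c x) := by
    intro y x
    have h2 : HasFDerivAt c (fderiv ℝ c x) x := (hcd x).hasFDerivAt
    have h3 : HasFDerivAt (fun x => (inner ℝ y (c x) : ℝ))
        ((innerSL ℝ y).comp (fderiv ℝ c x)) x := (innerSL ℝ y).hasFDerivAt.comp x h2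
    exact ((hfd x).hasFDerivAt.add h3).fderiv
  -- local Lipschitz data
  obtain ⟨K1, s1, hs1, hL1⟩ :=
    ((hf.fderiv_right (by norm_num)).contDiffAt :
      ContDiffAt ℝ 1 (fderiv ℝ f) xbar).exists_lipschitzOnWith
  obtain ⟨K2, s2, hs2, hL2⟩ :=
    ((hc.fderiv_right (by norm_num)).contDiffAt :
      ContDiffAt ℝ 1 (fderiv ℝ c) xbar).exists_lipschitzOnWith
  obtain ⟨K3, s3, hs3, hL3⟩ :=
    ((hc.of_le one_le_two).contDiffAt : ContDiffAt ℝ 1 c xbar).exists_lipschitzOnWith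
  have hx1 : xbar ∈ s1 := mem_of_mem_nhds hs1
  have hx2 : xbar ∈ s2 := mem_of_mem_nhds hs2
  have hx3 : xbar ∈ s3 := mem_of_mem_nhds hs3
  set C : ℝ := (K1:ℝ) + (‖ybar‖+1)*(K2:ℝ) + (K3:ℝ) + ‖fderiv ℝ c xbar‖ + 1 with hCdef
  have hC : 0 < C := by positivity
  refine ⟨C⁻¹, by positivity, (s1 ∩ s2 ∩ s3) ×ˢ (Set.univ ×ˢ Metric.ball ybar 1), ?_, ?_⟩
  · exact prod_mem_nhds (Filter.inter_mem (Filter.inter_mem hs1 hs2) hs3)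
      (prod_mem_nhds Filter.univ_mem (Metric.ball_mem_nhds _ one_pos))
  intro k hk
  simp only [Set.mem_prod, Set.mem_inter_iff, Set.mem_univ, true_and] at hk
  obtain ⟨⟨⟨hX1, hX2⟩, hX3⟩, hYb⟩ := hk
  set X := A.x k
  set Z := A.z k
  set Y := A.y k
  have hμk : 0 < A.μ k := (A.hμthr k).1
  -- y k belongs to the limiting subdifferential at z k
  have hvreg : Y ∈ regSubdiff g Z := by
    have hv : Y = (A.μ k)⁻¹ • ((c X + A.μ k • A.yhat k) - Z) := by
      have h1 : (c X + A.μ k • A.yhat k) - Z = (c X - Z) + A.μ k • A.yhat k := by abel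
      rw [show Y = A.yhat k + (A.μ k)⁻¹ • (c X - Z) from A.hy k, h1, smul_add,
        inv_smul_smul₀ hμk.ne']
      abel
    rw [hv]
    exact prox_mem_regSubdiff g hgp (A.μ k) hμk _ _ (A.hprox k)
  have hlim : Y ∈ limSubdiff g Z :=
    ⟨fun _ => Z, fun _ => Y, tendsto_const_nhds, tendsto_const_nhds, tendsto_const_nhds,
      fun _ => hvreg⟩
  have hinf : (⨅ v ∈ limSubdiff g Z, ((‖Y - v‖ : ℝ) : EReal)) = 0 :=
    biInf_norm_zero _ _ hlim
  have hTheta : Theta f c g X Z Y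
      = ((‖fderiv ℝ (LagFn f c Y) X‖ + ‖c X - Z‖ : ℝ) : EReal) := by
    rw [Theta, hinf, add_zero]
  -- bound the gradient norm
  have hzero : fderiv ℝ f xbar = - (innerSL ℝ ybar).comp (fderiv ℝ c xbar) := by
    have h0 : fderiv ℝ f xbar + (innerSL ℝ ybar).comp (fderiv ℝ c xbar) = 0 := by
      rw [← hD ybar xbar]; exact hgrad0
    exact eq_neg_of_add_eq_zero_left h0
  have hkeyD : fderiv ℝ (LagFn f c Y) X
      = (fderiv ℝ f X - fderiv ℝ f xbar)
        + ((innerSL ℝ Y).comp (fderiv ℝ c X - fderiv ℝ c xbar)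
          + (innerSL ℝ (Y - ybar)).comp (fderiv ℝ c xbar)) := by
    rw [hD, map_sub, ContinuousLinearMap.sub_comp, ContinuousLinearMap.comp_sub, hzero]
    abel
  have hYn : ‖Y‖ ≤ ‖ybar‖ + 1 := by
    have h1 : ‖Y - ybar‖ < 1 := by
      rw [← dist_eq_norm]; exact Metric.mem_ball.mp hYb
    have h2 : ‖Y‖ ≤ ‖ybar‖ + ‖Y - ybar‖ := norm_le_insert' Y ybar
    linarith
  have hb1 : ‖fderiv ℝ f X - fderiv ℝ f xbar‖ ≤ (K1:ℝ) * ‖X - xbar‖ := by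
    have := hL1.dist_le_mul X hX1 xbar hx1
    rwa [dist_eq_norm, dist_eq_norm] at this
  have hb2 : ‖fderiv ℝ c X - fderiv ℝ c xbar‖ ≤ (K2:ℝ) * ‖X - xbar‖ := by
    have := hL2.dist_le_mul X hX2 xbar hx2
    rwa [dist_eq_norm, dist_eq_norm] at this
  have hb3 : ‖c X - c xbar‖ ≤ (K3:ℝ) * ‖X - xbar‖ := by
    have := hL3.dist_le_mul X hX3 xbar hx3
    rwa [dist_eq_norm, dist_eq_norm] at this
  have hc1 : ‖(innerSL ℝ Y).comp (fderiv ℝ c X - fderiv ℝ c xbar)‖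
      ≤ ‖Y‖ * ‖fderiv ℝ c X - fderiv ℝ c xbar‖ := by
    calc ‖(innerSL ℝ Y).comp (fderiv ℝ c X - fderiv ℝ c xbar)‖
        ≤ ‖innerSL ℝ Y‖ * ‖fderiv ℝ c X - fderiv ℝ c xbar‖ :=
          ContinuousLinearMap.opNorm_comp_le _ _
      _ = ‖Y‖ * ‖fderiv ℝ c X - fderiv ℝ c xbar‖ := by rw [innerSL_apply_norm]
  have hc2 : ‖(innerSL ℝ (Y - ybar)).comp (fderiv ℝ c xbar)‖
      ≤ ‖Y - ybar‖ * ‖fderiv ℝ c xbar‖ := by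
    calc ‖(innerSL ℝ (Y - ybar)).comp (fderiv ℝ c xbar)‖
        ≤ ‖innerSL ℝ (Y - ybar)‖ * ‖fderiv ℝ c xbar‖ :=
          ContinuousLinearMap.opNorm_comp_le _ _
      _ = ‖Y - ybar‖ * ‖fderiv ℝ c xbar‖ := by rw [innerSL_apply_norm]
  have hDb : ‖fderiv ℝ (LagFn f c Y) X‖
      ≤ (K1:ℝ) * ‖X - xbar‖ + (‖ybar‖+1) * ((K2:ℝ) * ‖X - xbar‖)
        + ‖fderiv ℝ c xbar‖ * ‖Y - ybar‖ := by
    rw [hkeyD]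
    have h1 := norm_add_le (fderiv ℝ f X - fderiv ℝ f xbar)
      ((innerSL ℝ Y).comp (fderiv ℝ c X - fderiv ℝ c xbar)
        + (innerSL ℝ (Y - ybar)).comp (fderiv ℝ c xbar))
    have h2 := norm_add_le ((innerSL ℝ Y).comp (fderiv ℝ c X - fderiv ℝ c xbar))
      ((innerSL ℝ (Y - ybar)).comp (fderiv ℝ c xbar))
    have hYnn : (0:ℝ) ≤ ‖Y‖ := norm_nonneg _
    have hK2nn : (0:ℝ) ≤ (K2:ℝ) := K2.coe_nonneg
    have hXnn : (0:ℝ) ≤ ‖X - xbar‖ := norm_nonneg _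
    have t1 : ‖Y‖ * ‖fderiv ℝ c X - fderiv ℝ c xbar‖ ≤ ‖Y‖ * ((K2:ℝ) * ‖X - xbar‖) :=
      mul_le_mul_of_nonneg_left hb2 hYnn
    have t2 : ‖Y‖ * ((K2:ℝ) * ‖X - xbar‖) ≤ (‖ybar‖+1) * ((K2:ℝ) * ‖X - xbar‖) :=
      mul_le_mul_of_nonneg_right hYn (mul_nonneg hK2nn hXnn)
    have t3 : ‖Y - ybar‖ * ‖fderiv ℝ c xbar‖ = ‖fderiv ℝ c xbar‖ * ‖Y - ybar‖ := mul_comm _ _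
    linarith [hc1, hc2, hb1]
  have hcb : ‖c X - Z‖ ≤ (K3:ℝ) * ‖X - xbar‖ + ‖Z - c xbar‖ := by
    have h1 : ‖c X - Z‖ ≤ ‖c X - c xbar‖ + ‖c xbar - Z‖ := norm_sub_le_norm_sub_add_norm_sub _ _ _
    have h2 : ‖c xbar - Z‖ = ‖Z - c xbar‖ := norm_sub_rev _ _
    linarith
  -- combine
  set R : ℝ := ‖X - xbar‖ + ‖Z - c xbar‖ + ‖Y - ybar‖ with hRdef
  have hT : ‖fderiv ℝ (LagFn f c Y) X‖ + ‖c X - Z‖ ≤ C * R := by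
    have hK1nn : (0:ℝ) ≤ (K1:ℝ) := K1.coe_nonneg
    have hK2nn : (0:ℝ) ≤ (K2:ℝ) := K2.coe_nonneg
    have hK3nn : (0:ℝ) ≤ (K3:ℝ) := K3.coe_nonneg
    have hXnn : (0:ℝ) ≤ ‖X - xbar‖ := norm_nonneg _
    have hZnn : (0:ℝ) ≤ ‖Z - c xbar‖ := norm_nonneg _
    have hYnn : (0:ℝ) ≤ ‖Y - ybar‖ := norm_nonneg _
    have hcnn : (0:ℝ) ≤ ‖fderiv ℝ c xbar‖ := norm_nonneg _
    have hybnn : (0:ℝ) ≤ ‖ybar‖ := norm_nonneg _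
    have e1 : ((K1:ℝ) + (‖ybar‖+1)*(K2:ℝ) + (K3:ℝ)) * ‖X - xbar‖ ≤ C * ‖X - xbar‖ :=
      mul_le_mul_of_nonneg_right (by simp only [hCdef]; linarith) hXnn
    have e2 : ‖Z - c xbar‖ ≤ C * ‖Z - c xbar‖ :=
      le_mul_of_one_le_left hZnn (by simp only [hCdef]; nlinarith)
    have e3 : ‖fderiv ℝ c xbar‖ * ‖Y - ybar‖ ≤ C * ‖Y - ybar‖ :=
      mul_le_mul_of_nonneg_right (by simp only [hCdef]; nlinarith) hYnn
    have hRC : C * R = C * ‖X - xbar‖ + C * ‖Z - c xbar‖ + C * ‖Y - ybar‖ := by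
      rw [hRdef]; ring
    have hexp : ((K1:ℝ) + (‖ybar‖+1)*(K2:ℝ) + (K3:ℝ)) * ‖X - xbar‖
        = (K1:ℝ) * ‖X - xbar‖ + (‖ybar‖+1) * ((K2:ℝ) * ‖X - xbar‖) + (K3:ℝ) * ‖X - xbar‖ := by
      ring
    linarith [hDb, hcb]
  rw [hTheta, ← EReal.coe_mul, EReal.coe_le_coe_iff]
  calc C⁻¹ * (‖fderiv ℝ (LagFn f c Y) X‖ + ‖c X - Z‖)
      ≤ C⁻¹ * (C * R) := by
        apply mul_le_mul_of_nonneg_left hT (by positivity)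
    _ = R := by field_simp


end Paper
end
end

section
/- Suppose Assumption (RC) holds: (i) x̄ is an M-stationary point of (P), ȳ ∈ Λ(x̄), and the upper error bound holds, i.e., there exist ρ_u > 0 and a neighborhood U of (x̄, c(x̄), ȳ) with ‖x − x̄‖ + ‖z − c(x̄)‖ + ‖y − ȳ‖ ≤ ρ_u·Θ(x, z, y) for all (x, z, y) ∈ U with z ∈ dom g; (ii) {(x^k, z^k, y^k)} is generated by the safeguarded implicit augmented Lagrangian algorithm with ε_k → 0; (iii) (x^k, y^k) → (x̄, ȳ); (iv) ŷ^k = y^{k−1} for all sufficiently large k. Then, setting Θ_k := Θ(x^k, z^k, y^k), the inequality (1 − ρ_u μ_k)·Θ_k ≤ ε_k + ρ_u μ_k·Θ_{k−1} holds for all sufficiently large k. -/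
open Filter Topology Bornology

noncomputable section

namespace Paper

variable {n m : ℕ}

section Aux

variable {m : ℕ}

lemma prox_real {g : Euc m → EReal} (hgp : ProperFn g) {μ : ℝ} (hμ : 0 < μ) {w zk : Euc m}
    (hmin : ∀ z, g zk + ((‖zk - w‖ ^ 2 / (2 * μ) : ℝ) : EReal) ≤
      g z + ((‖z - w‖ ^ 2 / (2 * μ) : ℝ) : EReal)) :
    ∃ r : ℝ, g zk = (r : EReal) := by
  refine ⟨(g zk).toReal, (EReal.coe_toReal ?_ (hgp.1 zk)).symm⟩
  obtain ⟨z0, hz0⟩ := hgp.2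
  intro htop
  have h2 := hmin z0
  rw [htop] at h2
  have h3 : g z0 + ((‖z0 - w‖ ^ 2 / (2 * μ) : ℝ) : EReal) < ⊤ := by
    lift g z0 to ℝ using ⟨hz0.ne, hgp.1 z0⟩ with s hs
    rw [← EReal.coe_add]
    exact EReal.coe_lt_top _
  have h4 : (⊤ : EReal) + ((‖zk - w‖ ^ 2 / (2 * μ) : ℝ) : EReal) = ⊤ := EReal.top_add_coe _
  rw [h4] at h2
  exact absurd (top_le_iff.mp h2) h3.ne

lemma prox_subgrad {g : Euc m → EReal} (hgp : ProperFn g) {μ : ℝ} (hμ : 0 < μ) {w zk : Euc m}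
    (hmin : ∀ z, g zk + ((‖zk - w‖ ^ 2 / (2 * μ) : ℝ) : EReal) ≤
      g z + ((‖z - w‖ ^ 2 / (2 * μ) : ℝ) : EReal)) :
    μ⁻¹ • (w - zk) ∈ regSubdiff g zk := by
  obtain ⟨r0, hr0⟩ := prox_real hgp hμ hmin
  have hpt : ∀ᶠ z in 𝓝[≠] zk, ((-‖z - zk‖ / (2 * μ) : ℝ) : EReal) ≤
      (g z - g zk - ((inner ℝ (μ⁻¹ • (w - zk)) (z - zk) : ℝ) : EReal)) /
        ((‖z - zk‖ : ℝ) : EReal) := by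
    filter_upwards [self_mem_nhdsWithin] with z hz
    have hzne : z ≠ zk := hz
    have hd : (0:ℝ) < ‖z - zk‖ := by
      rw [norm_pos_iff]; exact sub_ne_zero.2 hzne
    by_cases htop : g z = ⊤
    · rw [hr0, htop, EReal.top_sub_coe, EReal.top_sub_coe,
        EReal.top_div_of_pos_ne_top (EReal.coe_pos.2 hd) (EReal.coe_ne_top _)]
      exact le_top
    · lift g z to ℝ using ⟨htop, hgp.1 z⟩ with s hs
      have hsum : r0 + ‖zk - w‖ ^ 2 / (2 * μ) ≤ s + ‖z - w‖ ^ 2 / (2 * μ) := by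
        have h2 := hmin z
        rw [hr0, ← hs, ← EReal.coe_add, ← EReal.coe_add] at h2
        exact EReal.coe_le_coe_iff.mp h2
      rw [hr0, ← EReal.coe_sub, ← EReal.coe_sub, ← EReal.coe_div]
      apply EReal.coe_le_coe_iff.2
      have hip : (inner ℝ (μ⁻¹ • (w - zk)) (z - zk) : ℝ) =
          μ⁻¹ * (inner ℝ (w - zk) (z - zk) : ℝ) := real_inner_smul_left _ _ _
      have hexp : ‖z - w‖ ^ 2 =
          ‖z - zk‖ ^ 2 - 2 * (inner ℝ (w - zk) (z - zk) : ℝ) + ‖zk - w‖ ^ 2 := by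
        have h1 : z - w = (z - zk) + (zk - w) := by abel
        rw [h1, norm_add_sq_real]
        have h2 : (inner ℝ (z - zk) (zk - w) : ℝ) = -(inner ℝ (w - zk) (z - zk) : ℝ) := by
          rw [real_inner_comm, show zk - w = -(w - zk) by abel, inner_neg_left]
        rw [h2]; ring
      rw [le_div_iff₀ hd, hip]
      rw [hexp] at hsum
      have e1 : (‖z - zk‖ ^ 2 - 2 * (inner ℝ (w - zk) (z - zk) : ℝ) + ‖zk - w‖ ^ 2) / (2 * μ)
          = ‖z - zk‖ ^ 2 / (2 * μ) - 2 * ((inner ℝ (w - zk) (z - zk) : ℝ) / (2 * μ))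
            + ‖zk - w‖ ^ 2 / (2 * μ) := by ring
      have e2 : -‖z - zk‖ / (2 * μ) * ‖z - zk‖ = -(‖z - zk‖ ^ 2 / (2 * μ)) := by ring
      have e3 : μ⁻¹ * (inner ℝ (w - zk) (z - zk) : ℝ)
          = 2 * ((inner ℝ (w - zk) (z - zk) : ℝ) / (2 * μ)) := by ring
      rw [e1] at hsum
      rw [e2, e3]
      linarith [hsum]
  refine le_trans ?_ (liminf_le_liminf hpt)
  by_cases hbot : (𝓝[≠] zk) = ⊥
  · rw [hbot, liminf_bot]; exact le_top
  · haveI : (𝓝[≠] zk).NeBot := ⟨hbot⟩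
    have htend : Tendsto (fun z : Euc m => ((-‖z - zk‖ / (2 * μ) : ℝ) : EReal)) (𝓝[≠] zk)
        (𝓝 (0:EReal)) := by
      rw [show (0:EReal) = ((0:ℝ):EReal) from rfl]
      apply EReal.tendsto_coe.2
      have cont : Continuous (fun z : Euc m => -‖z - zk‖ / (2 * μ)) := by
        apply Continuous.div_const
        exact (continuous_norm.comp (continuous_id.sub continuous_const)).neg
      have h4 := (cont.tendsto zk).mono_left (nhdsWithin_le_nhds (s := {zk}ᶜ))
      simpa using h4
    rw [htend.liminf_eq]

lemma reg_mem_lim {g : Euc m → EReal} {z v : Euc m} (h : v ∈ regSubdiff g z) :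
    v ∈ limSubdiff g z :=
  ⟨fun _ => z, fun _ => v, tendsto_const_nhds, tendsto_const_nhds, tendsto_const_nhds,
    fun _ => h⟩

lemma theta_eq {n : ℕ} {f : Euc n → ℝ} {c : Euc n → Euc m} {g : Euc m → EReal} {x : Euc n}
    {z y : Euc m} (hy : y ∈ limSubdiff g z) :
    Theta f c g x z y = ((‖fderiv ℝ (LagFn f c y) x‖ + ‖c x - z‖ : ℝ) : EReal) := by
  have h0 : (⨅ v ∈ limSubdiff g z, ((‖y - v‖ : ℝ) : EReal)) = 0 := by
    apply le_antisymm
    · refine le_trans (iInf₂_le y hy) ?_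
      simp
    · exact le_iInf₂ fun v _ => EReal.coe_nonneg.2 (norm_nonneg _)
  rw [Theta, h0, add_zero]

end Aux

theorem statement18 {n m : ℕ}
    (f : Euc n → ℝ) (c : Euc n → Euc m) (g : Euc m → EReal)
    (hf : ContDiff ℝ 2 f) (hc : ContDiff ℝ 2 c)
    (hgp : ProperFn g) (hglsc : LowerSemicontinuous g) (hgpb : ProxBounded g)
    (hphi : ∃ r : ℝ, (⨅ x : Euc n, ((f x : EReal) + g (c x))) = (r : EReal))
    (xbar : Euc n) (ybar : Euc m) (hybar : ybar ∈ Lambda f c g xbar)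
    (ρ : ℝ) (hρ : 0 < ρ) (U : Set (Euc n × Euc m × Euc m))
    (hU : U ∈ 𝓝 ((xbar, c xbar, ybar) : Euc n × Euc m × Euc m))
    (hub : ∀ (x : Euc n) (z y : Euc m), (x, z, y) ∈ U → z ∈ edom g →
      ((‖x - xbar‖ + ‖z - c xbar‖ + ‖y - ybar‖ : ℝ) : EReal) ≤
        (ρ : EReal) * Theta f c g x z y)
    (A : ALMSeq n m f c g)
    (hε0 : Tendsto A.ε atTop (𝓝 0))
    (hxy : Tendsto (fun k => (A.x k, A.y k)) atTop (𝓝 (xbar, ybar)))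
    (hyh : ∀ᶠ k in atTop, A.yhat (k + 1) = A.y k) :
    ∀ᶠ k in atTop,
      ((1 - ρ * A.μ (k + 1) : ℝ) : EReal) * Theta f c g (A.x (k + 1)) (A.z (k + 1)) (A.y (k + 1))
        ≤ (A.ε (k + 1) : EReal) +
            ((ρ * A.μ (k + 1) : ℝ) : EReal) * Theta f c g (A.x k) (A.z k) (A.y k) := by
  have hμpos : ∀ k, 0 < A.μ k := fun k => (A.hμthr k).1
  have hμne' : ∀ k, A.μ k ≠ 0 := fun k => ne_of_gt (hμpos k)
  have hμmono : ∀ k, A.μ (k + 1) ≤ A.μ k := by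
    intro k; rw [A.hμupd k]; split
    · exact le_refl _
    · nlinarith [hμpos k, A.hκ.1, A.hκ.2]
  have hμbd : ∀ k, A.μ k ≤ A.μ 0 := by
    intro k; induction k with
    | zero => exact le_refl _
    | succ k ih => exact le_trans (hμmono k) ih
  have hyv : ∀ k, A.y k = (A.μ k)⁻¹ • ((c (A.x k) + A.μ k • A.yhat k) - A.z k) := by
    intro k
    rw [A.hy k, smul_sub, smul_sub, smul_add, smul_smul, inv_mul_cancel₀ (hμne' k), one_smul]
    abel
  have hymem : ∀ k, A.y k ∈ limSubdiff g (A.z k) := by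
    intro k
    rw [hyv k]
    exact reg_mem_lim (prox_subgrad hgp (hμpos k) (A.hprox k))
  have hzdom : ∀ k, A.z k ∈ edom g := by
    intro k
    obtain ⟨r, hr⟩ := prox_real hgp (hμpos k) (A.hprox k)
    show g (A.z k) < ⊤
    rw [hr]; exact EReal.coe_lt_top r
  let T : ℕ → ℝ := fun i => ‖fderiv ℝ (LagFn f c (A.y i)) (A.x i)‖ + ‖c (A.x i) - A.z i‖
  have hT : ∀ i, Theta f c g (A.x i) (A.z i) (A.y i) = ((T i : ℝ) : EReal) :=
    fun i => theta_eq (hymem i)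
  have hTnn : ∀ i, 0 ≤ T i := fun i => add_nonneg (norm_nonneg _) (norm_nonneg _)
  have hx : Tendsto A.x atTop (𝓝 xbar) := by
    have h := (continuous_fst.tendsto ((xbar, ybar) : Euc n × Euc m)).comp hxy
    exact h
  have hy' : Tendsto A.y atTop (𝓝 ybar) := by
    have h := (continuous_snd.tendsto ((xbar, ybar) : Euc n × Euc m)).comp hxy
    exact h
  have hdiff : Tendsto (fun k => A.y (k + 1) - A.y k) atTop (𝓝 0) := by
    have h := (hy'.comp (tendsto_add_atTop_nat 1)).sub hy'
    simpa [Function.comp] using h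
  have hcz : ∀ k, c (A.x k) - A.z k = A.μ k • (A.y k - A.yhat k) := by
    intro k
    rw [A.hy k, add_sub_cancel_left, smul_smul, mul_inv_cancel₀ (hμne' k), one_smul]
  have hzt : Tendsto (fun k => A.z (k + 1)) atTop (𝓝 (c xbar)) := by
    have h1 : ∀ᶠ k in atTop,
        A.z (k + 1) = c (A.x (k + 1)) - A.μ (k + 1) • (A.y (k + 1) - A.y k) := by
      filter_upwards [hyh] with k hk
      have h := hcz (k + 1)
      rw [hk] at h
      rw [← h, sub_sub_cancel]
    have hc1 : Tendsto (fun k => c (A.x (k + 1))) atTop (𝓝 (c xbar)) :=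
      (hc.continuous.tendsto xbar).comp (hx.comp (tendsto_add_atTop_nat 1))
    have hs : Tendsto (fun k => A.μ (k + 1) • (A.y (k + 1) - A.y k)) atTop (𝓝 0) := by
      have hbnd : Tendsto (fun k => A.μ 0 * ‖A.y (k + 1) - A.y k‖) atTop (𝓝 0) := by
        have h := hdiff.norm
        rw [norm_zero] at h
        have h2 := h.const_mul (A.μ 0)
        simpa using h2
      refine squeeze_zero_norm (fun k => ?_) hbnd
      rw [norm_smul, Real.norm_eq_abs, abs_of_pos (hμpos (k + 1))]
      exact mul_le_mul_of_nonneg_right (hμbd (k + 1)) (norm_nonneg _)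
    have h2 : Tendsto (fun k => c (A.x (k + 1)) - A.μ (k + 1) • (A.y (k + 1) - A.y k)) atTop
        (𝓝 (c xbar)) := by
      have h3 := hc1.sub hs
      simpa using h3
    exact Tendsto.congr' (h1.mono fun k hk => hk.symm) h2
  have htrip : Tendsto (fun k => ((A.x (k + 1), A.z (k + 1), A.y (k + 1)) :
      Euc n × Euc m × Euc m)) atTop (𝓝 (xbar, c xbar, ybar)) :=
    (hx.comp (tendsto_add_atTop_nat 1)).prodMk_nhds
      (hzt.prodMk_nhds (hy'.comp (tendsto_add_atTop_nat 1)))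
  have hUm : ∀ᶠ k in atTop, ((A.x (k + 1), A.z (k + 1), A.y (k + 1)) :
      Euc n × Euc m × Euc m) ∈ U := htrip.eventually (eventually_of_mem hU fun _ h => h)
  obtain ⟨N, hN⟩ := eventually_atTop.mp (hUm.and hyh)
  rw [eventually_atTop]
  refine ⟨N + 1, fun k hk => ?_⟩
  obtain ⟨j, rfl⟩ : ∃ j, k = j + 1 := ⟨k - 1, by omega⟩
  obtain ⟨hU0, -⟩ := hN j (by omega)
  obtain ⟨hU1, hyh1⟩ := hN (j + 1) (by omega)
  have hub1 : ‖A.y (j + 1 + 1) - ybar‖ ≤ ρ * T (j + 1 + 1) := by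
    have h := hub _ _ _ hU1 (hzdom (j + 1 + 1))
    rw [hT (j + 1 + 1), ← EReal.coe_mul] at h
    have h2 := EReal.coe_le_coe_iff.mp h
    have h3 := norm_nonneg (A.x (j + 1 + 1) - xbar)
    have h4 := norm_nonneg (A.z (j + 1 + 1) - c xbar)
    linarith
  have hub0 : ‖A.y (j + 1) - ybar‖ ≤ ρ * T (j + 1) := by
    have h := hub _ _ _ hU0 (hzdom (j + 1))
    rw [hT (j + 1), ← EReal.coe_mul] at h
    have h2 := EReal.coe_le_coe_iff.mp h
    have h3 := norm_nonneg (A.x (j + 1) - xbar)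
    have h4 := norm_nonneg (A.z (j + 1) - c xbar)
    linarith
  have hV : ‖c (A.x (j + 1 + 1)) - A.z (j + 1 + 1)‖ =
      A.μ (j + 1 + 1) * ‖A.y (j + 1 + 1) - A.y (j + 1)‖ := by
    rw [hcz (j + 1 + 1), hyh1, norm_smul, Real.norm_eq_abs, abs_of_pos (hμpos (j + 1 + 1))]
  have htri : ‖A.y (j + 1 + 1) - A.y (j + 1)‖ ≤
      ‖A.y (j + 1 + 1) - ybar‖ + ‖A.y (j + 1) - ybar‖ := by
    have h := norm_sub_le (A.y (j + 1 + 1) - ybar) (A.y (j + 1) - ybar)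
    rw [sub_sub_sub_cancel_right] at h
    linarith [h, norm_nonneg (A.y (j + 1) - ybar)]
  have hdual2 := A.hdual (j + 1 + 1)
  have hkey : T (j + 1 + 1) ≤ A.ε (j + 1 + 1) +
      A.μ (j + 1 + 1) * (ρ * T (j + 1 + 1) + ρ * T (j + 1)) := by
    have h1 : A.μ (j + 1 + 1) * ‖A.y (j + 1 + 1) - A.y (j + 1)‖ ≤
        A.μ (j + 1 + 1) * (ρ * T (j + 1 + 1) + ρ * T (j + 1)) :=
      mul_le_mul_of_nonneg_left (by linarith) (le_of_lt (hμpos (j + 1 + 1)))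
    have h0 : T (j + 1 + 1) = ‖fderiv ℝ (LagFn f c (A.y (j + 1 + 1))) (A.x (j + 1 + 1))‖ +
        ‖c (A.x (j + 1 + 1)) - A.z (j + 1 + 1)‖ := rfl
    have h2 : T (j + 1 + 1) = ‖fderiv ℝ (LagFn f c (A.y (j + 1 + 1))) (A.x (j + 1 + 1))‖ +
        A.μ (j + 1 + 1) * ‖A.y (j + 1 + 1) - A.y (j + 1)‖ := by rw [h0, hV]
    linarith [h1, hdual2, h2]
  rw [hT (j + 1 + 1), hT (j + 1), ← EReal.coe_mul, ← EReal.coe_mul, ← EReal.coe_add,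
    EReal.coe_le_coe_iff]
  nlinarith [hkey]


end Paper
end
end
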